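/- Let n ≥ 2 and define u(x) = x₁ x₂ (log(R/|x|))² for x ∈ ℝⁿ \ {0}. There exists R₀ > 1 such that for every R ≥ R₀ and every x with 0 < |x| ≤ 1, the mixed second partial derivative satisfies ∂₁∂₂ u(x) ≥ (1/2)·(log(R/|x|))². -/

import Mathlib

open Set Real

noncomputable def myL (R s : ℝ) : ℝ := Real.log R - Real.log s / 2
noncomputable def myφ (R s : ℝ) : ℝ := (myL R s)^2
noncomputable def myψ (R s : ℝ) : ℝ := -(myL R s) / s
noncomputable def myχ (R s : ℝ) : ℝ := (1/2 + myL R s) / s^2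

lemma hasDerivAt_myL {R s : ℝ} (hs : s ≠ 0) : HasDerivAt (myL R) (-(s⁻¹/2)) s := by
  exact ((Real.hasDerivAt_log hs).div_const 2).const_sub (Real.log R)

lemma hasDerivAt_myφ {R s : ℝ} (hs : s ≠ 0) : HasDerivAt (myφ R) (myψ R s) s := by
  have h := (hasDerivAt_myL (R := R) hs).pow 2
  refine h.congr_deriv (Eq.symm ?_)
  rw [myψ, pow_one, div_eq_mul_inv]; push_cast; ring

lemma hasDerivAt_myψ {R s : ℝ} (hs : s ≠ 0) : HasDerivAt (myψ R) (myχ R s) s := by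
  have h := ((hasDerivAt_myL (R := R) hs).neg).div (hasDerivAt_id s) hs
  refine h.congr_deriv (Eq.symm ?_)
  rw [myχ]; simp only [id, Pi.neg_apply]; field_simp; ring

section
variable {n : ℕ} (R : ℝ) (i0 i1 : Fin n)

lemma hasFDerivAt_Q (y : EuclideanSpace ℝ (Fin n)) :
    HasFDerivAt (fun z : EuclideanSpace ℝ (Fin n) => ‖z‖^2) ((2:ℕ) • innerSL ℝ y) y :=
  (hasStrictFDerivAt_norm_sq y).hasFDerivAt

lemma hasFDerivAt_u {y : EuclideanSpace ℝ (Fin n)} (hy : y ≠ 0) :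
    HasFDerivAt (𝕜 := ℝ)
      (fun z : EuclideanSpace ℝ (Fin n) => z i0 * z i1 * myφ R (‖z‖^2))
      ((y i0 * y i1) • (myψ R (‖y‖^2) • ((2:ℕ) • innerSL ℝ y)) +
        myφ R (‖y‖^2) •
          (y i0 • EuclideanSpace.proj (𝕜 := ℝ) i1 + y i1 • EuclideanSpace.proj (𝕜 := ℝ) i0)) y := by
  have hs : (‖y‖^2 : ℝ) ≠ 0 := pow_ne_zero _ (norm_ne_zero_iff.mpr hy)
  have hφQ := (hasDerivAt_myφ (R := R) hs).comp_hasFDerivAt y (hasFDerivAt_Q y)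
  have ha : HasFDerivAt (𝕜 := ℝ) (fun z : EuclideanSpace ℝ (Fin n) => z i0)
      (EuclideanSpace.proj (𝕜 := ℝ) i0) y := (EuclideanSpace.proj (𝕜 := ℝ) i0).hasFDerivAt
  have hb : HasFDerivAt (𝕜 := ℝ) (fun z : EuclideanSpace ℝ (Fin n) => z i1)
      (EuclideanSpace.proj (𝕜 := ℝ) i1) y := (EuclideanSpace.proj (𝕜 := ℝ) i1).hasFDerivAt
  exact (ha.mul hb).mul hφQ

lemma hasFDerivAt_f {x : EuclideanSpace ℝ (Fin n)} (hx : x ≠ 0) :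
    HasFDerivAt (𝕜 := ℝ)
      (fun z : EuclideanSpace ℝ (Fin n) =>
        z i0 * myφ R (‖z‖^2) + 2 * z i0 * (z i1 * z i1) * myψ R (‖z‖^2))
      ((x i0 • (myψ R (‖x‖^2) • ((2:ℕ) • innerSL ℝ x)) +
          myφ R (‖x‖^2) • EuclideanSpace.proj (𝕜 := ℝ) i0) +
        ((2 * x i0 * (x i1 * x i1)) • (myχ R (‖x‖^2) • ((2:ℕ) • innerSL ℝ x)) +
          myψ R (‖x‖^2) •
            ((2 * x i0) • (x i1 • EuclideanSpace.proj (𝕜 := ℝ) i1 +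
                x i1 • EuclideanSpace.proj (𝕜 := ℝ) i1) +
              (x i1 * x i1) • ((2:ℝ) • EuclideanSpace.proj (𝕜 := ℝ) i0)))) x := by
  have hs : (‖x‖^2 : ℝ) ≠ 0 := pow_ne_zero _ (norm_ne_zero_iff.mpr hx)
  have hφQ := (hasDerivAt_myφ (R := R) hs).comp_hasFDerivAt x (hasFDerivAt_Q x)
  have hψQ := (hasDerivAt_myψ (R := R) hs).comp_hasFDerivAt x (hasFDerivAt_Q x)
  have ha : HasFDerivAt (𝕜 := ℝ) (fun z : EuclideanSpace ℝ (Fin n) => z i0)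
      (EuclideanSpace.proj (𝕜 := ℝ) i0) x := (EuclideanSpace.proj (𝕜 := ℝ) i0).hasFDerivAt
  have hb : HasFDerivAt (𝕜 := ℝ) (fun z : EuclideanSpace ℝ (Fin n) => z i1)
      (EuclideanSpace.proj (𝕜 := ℝ) i1) x := (EuclideanSpace.proj (𝕜 := ℝ) i1).hasFDerivAt
  exact (ha.mul hφQ).add (((ha.const_mul 2).mul (hb.mul hb)).mul hψQ)

end

lemma key_ineq {L s A B : ℝ} (hs : 0 < s) (hab : A*A + B*B ≤ s) (hL : 4 ≤ L) :
    1/2 * L^2 ≤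
      L^2 + 2*(A*A)*(-L/s) + 2*(B*B)*(-L/s) + 4*(A*A)*(B*B)*((1/2+L)/s^2) := by
  have hL0 : (0:ℝ) ≤ L := by linarith
  have hL4 : (0:ℝ) ≤ L - 4 := by linarith
  rw [← sub_nonneg]
  have heq : L^2 + 2*(A*A)*(-L/s) + 2*(B*B)*(-L/s) + 4*(A*A)*(B*B)*((1/2+L)/s^2)
      - 1/2 * L^2 =
      (L^2*s^2/2 - 2*L*(A*A+B*B)*s + 2*(A*A)*(B*B) + 4*(A*A)*(B*B)*L) / s^2 := by
    field_simp
    ring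
  rw [heq]
  apply div_nonneg _ (by positivity)
  nlinarith [mul_nonneg (mul_nonneg hL0 hs.le) (sub_nonneg.2 hab),
    mul_nonneg (mul_nonneg hL0 (mul_self_nonneg A)) (mul_self_nonneg B),
    mul_nonneg (mul_nonneg (mul_nonneg hL0 hL4) hs.le) hs.le,
    mul_nonneg (mul_self_nonneg A) (mul_self_nonneg B)]

lemma main_aux {n : ℕ} (i0 i1 : Fin n) (hne : i0 ≠ i1) (R : ℝ) (hR : Real.exp 4 ≤ R)
    (x : EuclideanSpace ℝ (Fin n)) (hx : 0 < ‖x‖) (hx1 : ‖x‖ ≤ 1) :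
    (1 / 2) * (log (R / ‖x‖)) ^ 2 ≤
      fderiv ℝ
        (fun y : EuclideanSpace ℝ (Fin n) =>
          fderiv ℝ
            (fun z : EuclideanSpace ℝ (Fin n) =>
              z i0 * z i1 * (log (R / ‖z‖)) ^ 2)
            y (EuclideanSpace.single i1 1))
        x (EuclideanSpace.single i0 1) := by
  have hR0 : (0:ℝ) < R := lt_of_lt_of_le (Real.exp_pos 4) hR
  have hxne : x ≠ 0 := norm_pos_iff.mp hx
  -- log rewrite for nonzero z
  have hlog : ∀ z : EuclideanSpace ℝ (Fin n), z ≠ 0 →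
      Real.log (R / ‖z‖) = myL R (‖z‖^2) := by
    intro z hz
    have hz0 : ‖z‖ ≠ 0 := norm_ne_zero_iff.mpr hz
    rw [myL, Real.log_div (ne_of_gt hR0) hz0, Real.log_pow]
    push_cast; ring
  -- the inner functions agree off 0
  have huv : ∀ z : EuclideanSpace ℝ (Fin n), z ≠ 0 →
      z i0 * z i1 * (log (R / ‖z‖)) ^ 2 = z i0 * z i1 * myφ R (‖z‖^2) := by
    intro z hz; rw [myφ, hlog z hz]
  -- eventual equality of the derivative-evaluation functions
  have hgf : (fun y : EuclideanSpace ℝ (Fin n) =>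
        fderiv ℝ (fun z : EuclideanSpace ℝ (Fin n) =>
          z i0 * z i1 * (log (R / ‖z‖)) ^ 2) y (EuclideanSpace.single i1 1))
      =ᶠ[nhds x] (fun y : EuclideanSpace ℝ (Fin n) =>
        y i0 * myφ R (‖y‖^2) + 2 * y i0 * (y i1 * y i1) * myψ R (‖y‖^2)) := by
    have hne0 : ∀ᶠ y in nhds x, y ≠ (0 : EuclideanSpace ℝ (Fin n)) :=
      isOpen_compl_singleton.eventually_mem hxne
    filter_upwards [hne0] with y hy
    have hEq : (fun z : EuclideanSpace ℝ (Fin n) => z i0 * z i1 * (log (R / ‖z‖)) ^ 2)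
        =ᶠ[nhds y] (fun z : EuclideanSpace ℝ (Fin n) => z i0 * z i1 * myφ R (‖z‖^2)) := by
      filter_upwards [isOpen_compl_singleton.eventually_mem hy] with z hz
      exact huv z hz
    rw [hEq.fderiv_eq, (hasFDerivAt_u R i0 i1 hy).fderiv]
    simp [EuclideanSpace.inner_single_right, EuclideanSpace.single_apply, hne, hne.symm]
    ring
  rw [hgf.fderiv_eq, (hasFDerivAt_f R i0 i1 hxne).fderiv]
  rw [hlog x hxne]
  have heval : ((x i0 • (myψ R (‖x‖^2) • ((2:ℕ) • innerSL ℝ x)) +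
          myφ R (‖x‖^2) • EuclideanSpace.proj (𝕜 := ℝ) i0) +
        ((2 * x i0 * (x i1 * x i1)) • (myχ R (‖x‖^2) • ((2:ℕ) • innerSL ℝ x)) +
          myψ R (‖x‖^2) •
            ((2 * x i0) • (x i1 • EuclideanSpace.proj (𝕜 := ℝ) i1 +
                x i1 • EuclideanSpace.proj (𝕜 := ℝ) i1) +
              (x i1 * x i1) • ((2:ℝ) • EuclideanSpace.proj (𝕜 := ℝ) i0))))
      (EuclideanSpace.single i0 1) =
      myφ R (‖x‖^2) + 2 * (x i0 * x i0) * myψ R (‖x‖^2) +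
        2 * (x i1 * x i1) * myψ R (‖x‖^2) +
        4 * (x i0 * x i0) * (x i1 * x i1) * myχ R (‖x‖^2) := by
    simp [EuclideanSpace.inner_single_right, EuclideanSpace.single_apply, hne, hne.symm]
    ring
  rw [heval]
  -- now pure real arithmetic
  set s : ℝ := ‖x‖^2 with hs_def
  have hs : 0 < s := by positivity
  have hs1 : s ≤ 1 := by
    rw [hs_def]; exact pow_le_one₀ (norm_nonneg x) hx1
  have hL4 : 4 ≤ myL R s := by
    have h1 : 4 ≤ Real.log R := (Real.le_log_iff_exp_le hR0).mpr hR
    have h2 : Real.log s ≤ 0 := Real.log_nonpos hs.le hs1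
    rw [myL]; linarith
  have hab : x i0 * x i0 + x i1 * x i1 ≤ s := by
    have h1 : ∑ i ∈ ({i0, i1} : Finset (Fin n)), x i ^ 2 ≤ ∑ i, x i ^ 2 :=
      Finset.sum_le_univ_sum_of_nonneg (fun i => sq_nonneg _)
    have h2 : ∑ i ∈ ({i0, i1} : Finset (Fin n)), x i ^ 2 = x i0 ^ 2 + x i1 ^ 2 :=
      Finset.sum_pair hne
    have h3 : s = ∑ i, x i ^ 2 := by
      rw [hs_def, EuclideanSpace.norm_eq, Real.sq_sqrt (by positivity)]
      simp [Real.norm_eq_abs, sq_abs]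
    nlinarith [h1, h2, h3]
  have := key_ineq (L := myL R s) (A := x i0) (B := x i1) hs hab hL4
  rw [myφ, myψ, myχ]
  calc (1/2) * (myL R s)^2 ≤ _ := this
    _ = _ := by ring

/-- For `u x = x₁ x₂ (log (R/‖x‖))²`, there is `R₀ > 1` such that for every `R ≥ R₀`
and every `x` with `0 < ‖x‖ ≤ 1`, the mixed second partial derivative satisfies
`∂₁∂₂ u (x) ≥ (1/2) (log (R/‖x‖))²`. -/
theorem bmo_counterexample_mixed_derivative_lower_bound
    (n : ℕ) (hn : 2 ≤ n) :
    ∃ R₀ : ℝ, 1 < R₀ ∧ ∀ R : ℝ, R₀ ≤ R →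
      ∀ x : EuclideanSpace ℝ (Fin n), 0 < ‖x‖ → ‖x‖ ≤ 1 →
        (1 / 2) * (log (R / ‖x‖)) ^ 2 ≤
          fderiv ℝ
            (fun y : EuclideanSpace ℝ (Fin n) =>
              fderiv ℝ
                (fun z : EuclideanSpace ℝ (Fin n) =>
                  z (⟨0, by omega⟩ : Fin n) * z (⟨1, by omega⟩ : Fin n) *
                    (log (R / ‖z‖)) ^ 2)
                y (EuclideanSpace.single (⟨1, by omega⟩ : Fin n) 1))
            x (EuclideanSpace.single (⟨0, by omega⟩ : Fin n) 1) := by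
  refine ⟨Real.exp 4, by linarith [Real.add_one_le_exp (4:ℝ)], ?_⟩
  intro R hR x hx hx1
  have hne : (⟨0, by omega⟩ : Fin n) ≠ (⟨1, by omega⟩ : Fin n) := by
    intro h
    simpa using congrArg Fin.val h
  exact main_aux _ _ hne R hR x hx hx1
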